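/- Let n ≥ 1 and let λ : Fin n → ℝ with λ_i ≤ 0 for some index i, and set φ₀(z) := Σ_j λ_j |z_j|² for z ∈ ℂⁿ. If f : ℂⁿ → ℂ is an entire function with ∫_{ℂⁿ} |f(w)|² e^{−φ₀(w)} dV(w) < ∞, then f is identically zero. -/

import Mathlib

open MeasureTheory
open Real Set Complex

theorem my_lintegral_comp_polarCoord_symm (F : ℝ × ℝ → ENNReal) :
    ∫⁻ p in polarCoord.target, ENNReal.ofReal p.1 * F (polarCoord.symm p) = ∫⁻ p, F p := by
  set B : ℝ × ℝ → ℝ × ℝ →L[ℝ] ℝ × ℝ := fun p =>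
    LinearMap.toContinuousLinearMap (Matrix.toLin (Module.Basis.finTwoProd ℝ) (Module.Basis.finTwoProd ℝ)
      !![Real.cos p.2, -p.1 * Real.sin p.2; Real.sin p.2, p.1 * Real.cos p.2])
  have A : ∀ p ∈ polarCoord.target, HasFDerivWithinAt polarCoord.symm (B p) polarCoord.target p :=
    fun p _ => (hasFDerivAt_polarCoord_symm p).hasFDerivWithinAt
  have B_det : ∀ p, (B p).det = p.1 := by
    intro p
    conv_rhs => rw [← one_mul p.1, ← Real.cos_sq_add_sin_sq p.2]
    simp only [B, neg_mul, LinearMap.det_toContinuousLinearMap, LinearMap.det_toLin,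
      Matrix.det_fin_two_of, sub_neg_eq_add]
    ring
  symm
  calc
    ∫⁻ p, F p = ∫⁻ p in polarCoord.source, F p := by
      rw [← setLIntegral_univ]
      exact (setLIntegral_congr polarCoord_source_ae_eq_univ).symm
    _ = ∫⁻ p in polarCoord.symm '' polarCoord.target, F p := by
      rw [OpenPartialHomeomorph.symm_image_target_eq_source]
    _ = ∫⁻ p in polarCoord.target, ENNReal.ofReal |(B p).det| * F (polarCoord.symm p) := by
      apply lintegral_image_eq_lintegral_abs_det_fderiv_mul volume
        polarCoord.open_target.measurableSet A
      exact polarCoord.symm.injOn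
    _ = ∫⁻ p in polarCoord.target, ENNReal.ofReal p.1 * F (polarCoord.symm p) := by
      apply setLIntegral_congr_fun polarCoord.open_target.measurableSet
      intro p hp
      dsimp only
      rw [B_det, abs_of_pos hp.1]

theorem my_lintegral_comp_complex_polarCoord_symm (F : ℂ → ENNReal) :
    ∫⁻ p in polarCoord.target, ENNReal.ofReal p.1 * F (Complex.polarCoord.symm p)
      = ∫⁻ z, F z := by
  rw [← (Complex.volume_preserving_equiv_real_prod.symm).lintegral_comp_emb
    Complex.measurableEquivRealProd.symm.measurableEmbedding,
    ← my_lintegral_comp_polarCoord_symm]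
  rfl


theorem entire_L2_zero (g : ℂ → ℂ) (hg : Differentiable ℂ g)
    (hL2 : ∫⁻ z, ENNReal.ofReal (‖g z‖ ^ 2) ∂volume < ⊤) : g = 0 := by
  funext c
  show g c = 0
  by_contra hc
  set h2 : ℂ → ℂ := fun z => (g z) ^ 2 with hh2
  have hh2d : Differentiable ℂ h2 := fun z => ((hg z).pow 2)
  -- circle mean value bound
  have circ : ∀ r : ℝ, 0 < r →
      ENNReal.ofReal (2 * π) * ENNReal.ofReal (‖g c‖ ^ 2)
        ≤ ∫⁻ θ in Ioo (-π) π, ENNReal.ofReal (‖g (circleMap c r θ)‖ ^ 2) := by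
    intro r hr
    have mvp := two_pi_I_inv_smul_circleIntegral_sub_inv_smul_of_differentiable_on_off_countable
      (f := h2) (c := c) (R := r) (w := c) countable_empty (Metric.mem_ball_self hr)
      hh2d.continuous.continuousOn (fun x _ => (hh2d x))
    have eq1 : (∮ z in C(c, r), (z - c)⁻¹ • h2 z)
        = ∫ θ in (0:ℝ)..(2*π), Complex.I * h2 (circleMap c r θ) := by
      rw [circleIntegral]
      congr 1
      funext θ
      have hne : circleMap 0 r θ ≠ 0 := by
        simpa using circleMap_ne_center (c := (0:ℂ)) (R := r) hr.ne' (θ := θ)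
      rw [deriv_circleMap, circleMap_sub_center, smul_eq_mul, smul_eq_mul]
      field_simp
    have eq2 : h2 c = (2 * (π:ℂ))⁻¹ * ∫ θ in (0:ℝ)..(2*π), h2 (circleMap c r θ) := by
      rw [← mvp, eq1, intervalIntegral.integral_const_mul, smul_eq_mul]
      have hπ : (π:ℂ) ≠ 0 := Complex.ofReal_ne_zero.2 Real.pi_ne_zero
      field_simp
    have hInt : IntervalIntegrable (fun θ => h2 (circleMap c r θ)) volume 0 (2*π) :=
      ((hh2d.continuous).comp (continuous_circleMap c r)).intervalIntegrable _ _
    have bound : 2 * π * ‖g c‖^2 ≤ ∫ θ in (0:ℝ)..(2*π), ‖g (circleMap c r θ)‖^2 := by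
      have h1 : ‖h2 c‖ = ‖g c‖^2 := by simp [hh2, norm_pow]
      have h2π : (0:ℝ) < 2 * π := by positivity
      have h3 : ‖h2 c‖ ≤ (2*π)⁻¹ * ∫ θ in (0:ℝ)..(2*π), ‖h2 (circleMap c r θ)‖ := by
        rw [eq2]
        rw [norm_mul]
        gcongr
        · have hcast : (2 * (π:ℂ)) = ((2*π : ℝ) : ℂ) := by push_cast; ring
          have : ‖(2 * (π:ℂ))⁻¹‖ = (2*π)⁻¹ := by
            rw [norm_inv, hcast, Complex.norm_real, Real.norm_of_nonneg (by positivity)]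
          rw [this]
        · exact intervalIntegral.norm_integral_le_integral_norm h2π.le
      have h4 : (fun θ => ‖h2 (circleMap c r θ)‖) = fun θ => ‖g (circleMap c r θ)‖^2 := by
        funext θ; simp [hh2, norm_pow]
      rw [h4] at h3
      rw [h1] at h3
      calc 2 * π * ‖g c‖^2 ≤ 2 * π * ((2*π)⁻¹ * ∫ θ in (0:ℝ)..(2*π), ‖g (circleMap c r θ)‖^2) := by
            gcongr
        _ = ∫ θ in (0:ℝ)..(2*π), ‖g (circleMap c r θ)‖^2 := by
            field_simp
    have per : Function.Periodic (fun θ => ‖g (circleMap c r θ)‖^2) (2*π) :=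
      (periodic_circleMap c r).comp fun z => ‖g z‖^2
    have shift : (∫ θ in (0:ℝ)..(2*π), ‖g (circleMap c r θ)‖^2)
        = ∫ θ in (-π)..π, ‖g (circleMap c r θ)‖^2 := by
      have := per.intervalIntegral_add_eq (-π) 0
      simp only [zero_add] at this
      have hb : -π + 2*π = π := by ring
      rw [hb] at this
      rw [← this]
    have toL : ENNReal.ofReal (∫ θ in (-π)..π, ‖g (circleMap c r θ)‖^2)
        ≤ ∫⁻ θ in Ioo (-π) π, ENNReal.ofReal (‖g (circleMap c r θ)‖ ^ 2) := by
      rw [intervalIntegral.integral_of_le (by linarith [pi_pos] : (-π:ℝ) ≤ π)]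
      rw [show (Ioo (-π) π) = Ioo (-π) π from rfl]
      have hmeas : AEStronglyMeasurable (fun θ => ‖g (circleMap c r θ)‖^2)
          (volume.restrict (Ioc (-π) π)) :=
        (((hg.continuous.comp (continuous_circleMap c r)).norm.pow 2)).aestronglyMeasurable
      rw [integral_eq_lintegral_of_nonneg_ae (Filter.Eventually.of_forall fun θ => by positivity)
        hmeas]
      rw [setLIntegral_congr (Ioo_ae_eq_Ioc (a := -π) (b := π)).symm]
      exact ENNReal.ofReal_toReal_le
    calc ENNReal.ofReal (2 * π) * ENNReal.ofReal (‖g c‖ ^ 2)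
        = ENNReal.ofReal (2 * π * ‖g c‖^2) :=
          (ENNReal.ofReal_mul (by positivity)).symm
      _ ≤ ENNReal.ofReal (∫ θ in (-π)..π, ‖g (circleMap c r θ)‖^2) := by
          rw [← shift]; exact ENNReal.ofReal_le_ofReal bound
      _ ≤ _ := toL
  -- main chain
  have hgm : Measurable fun z : ℂ => ENNReal.ofReal (‖g z‖ ^ 2) :=
    ((hg.continuous.norm.pow 2)).measurable.ennreal_ofReal
  have hcm : Continuous fun p : ℝ × ℝ => circleMap c p.1 p.2 := by
    simp only [circleMap]
    fun_prop
  have hum : Measurable fun p : ℝ × ℝ => ENNReal.ofReal (‖g (circleMap c p.1 p.2)‖ ^ 2) :=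
    ((hg.continuous.comp hcm).norm.pow 2).measurable.ennreal_ofReal
  have trans : (∫⁻ z, ENNReal.ofReal (‖g (c + z)‖ ^ 2) ∂volume)
      = ∫⁻ z, ENNReal.ofReal (‖g z‖ ^ 2) ∂volume := by
    exact (measurePreserving_add_left volume c).lintegral_comp hgm
  have key_pt : ∀ p : ℝ × ℝ, c + Complex.polarCoord.symm p = circleMap c p.1 p.2 := by
    intro p
    rw [Complex.polarCoord_symm_apply]
    simp only [circleMap, Complex.exp_mul_I]
    push_cast
    ring
  have polar : (∫⁻ p in polarCoord.target,
        ENNReal.ofReal p.1 * ENNReal.ofReal (‖g (circleMap c p.1 p.2)‖ ^ 2) ∂volume)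
      = ∫⁻ z, ENNReal.ofReal (‖g z‖ ^ 2) ∂volume := by
    rw [← trans, ← my_lintegral_comp_complex_polarCoord_symm
      (fun z => ENNReal.ofReal (‖g (c + z)‖ ^ 2))]
    apply setLIntegral_congr_fun polarCoord.open_target.measurableSet
    intro p _
    dsimp only
    rw [key_pt p]
  have fub : (∫⁻ p in polarCoord.target,
        ENNReal.ofReal p.1 * ENNReal.ofReal (‖g (circleMap c p.1 p.2)‖ ^ 2) ∂volume)
      = ∫⁻ r in Ioi (0:ℝ), ENNReal.ofReal r *
          ∫⁻ θ in Ioo (-π) π, ENNReal.ofReal (‖g (circleMap c r θ)‖ ^ 2) ∂volume ∂volume := by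
    have htarget : polarCoord.target = Ioi (0:ℝ) ×ˢ Ioo (-π) π := rfl
    rw [htarget, Measure.volume_eq_prod, ← Measure.prod_restrict]
    rw [lintegral_prod (fun p : ℝ × ℝ => ENNReal.ofReal p.1 * ENNReal.ofReal (‖g (circleMap c p.1 p.2)‖ ^ 2))
      ((measurable_fst.ennreal_ofReal.mul hum).aemeasurable)]
    congr 1
    funext r
    exact lintegral_const_mul' _ _ ENNReal.ofReal_ne_top
  have lower : (∫⁻ r in Ioi (0:ℝ), ENNReal.ofReal r *
        ∫⁻ θ in Ioo (-π) π, ENNReal.ofReal (‖g (circleMap c r θ)‖ ^ 2) ∂volume ∂volume) = ⊤ := by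
    have hK : (0:ENNReal) < ENNReal.ofReal (2 * π) * ENNReal.ofReal (‖g c‖ ^ 2) := by
      apply ENNReal.mul_pos
      · simp only [ne_eq, ENNReal.ofReal_eq_zero, not_le]
        positivity
      · simp only [ne_eq, ENNReal.ofReal_eq_zero, not_le]
        exact pow_pos (norm_pos_iff.2 hc) 2
    set K := ENNReal.ofReal (2 * π) * ENNReal.ofReal (‖g c‖ ^ 2) with hKdef
    have step1 : (∫⁻ r in Ioi (0:ℝ), ENNReal.ofReal r * K ∂volume)
        ≤ ∫⁻ r in Ioi (0:ℝ), ENNReal.ofReal r *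
            ∫⁻ θ in Ioo (-π) π, ENNReal.ofReal (‖g (circleMap c r θ)‖ ^ 2) ∂volume ∂volume := by
      apply lintegral_mono_ae
      rw [ae_restrict_iff' measurableSet_Ioi]
      filter_upwards with r hr
      exact mul_le_mul_right (circ r hr) _
    have step2 : (∫⁻ r in Ioi (0:ℝ), ENNReal.ofReal r * K ∂volume) = ⊤ := by
      rw [lintegral_mul_const' _ _ (by
        exact ENNReal.mul_ne_top ENNReal.ofReal_ne_top ENNReal.ofReal_ne_top)]
      apply ENNReal.mul_eq_top.2
      right
      constructor
      · have h1 : (∫⁻ r in Ioi (1:ℝ), 1 ∂volume) = ⊤ := by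
          simp [Real.volume_Ioi]
        have h2le : (∫⁻ r in Ioi (1:ℝ), 1 ∂volume) ≤ ∫⁻ r in Ioi (1:ℝ), ENNReal.ofReal r ∂volume := by
          apply lintegral_mono_ae
          rw [ae_restrict_iff' measurableSet_Ioi]
          filter_upwards with r hr
          exact ENNReal.one_le_ofReal.2 (le_of_lt hr)
        have h3le : (∫⁻ r in Ioi (1:ℝ), ENNReal.ofReal r ∂volume)
            ≤ ∫⁻ r in Ioi (0:ℝ), ENNReal.ofReal r ∂volume :=
          lintegral_mono_set (Ioi_subset_Ioi (by norm_num))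
        have := le_trans (h1 ▸ h2le) h3le
        exact top_unique this
      · exact hK.ne'
    exact top_unique (step2 ▸ step1)
  rw [fub] at polar
  rw [lower] at polar
  exact absurd (polar ▸ hL2) (by simp)


/-- (Triviality of the model weighted Bergman space outside `X(0)`.) Let
`φ₀(z) = Σ_j λ_j |z_j|²` on `ℂⁿ` with `λ_i ≤ 0` for some index `i`. Then every entire function
`f` on `ℂⁿ` with `∫_{ℂⁿ} |f|² e^{-φ₀} dV < ∞` vanishes identically. -/
theorem model_bergman_space_trivial_of_nonpositive_eigenvalue
    {n : ℕ} (hn : 1 ≤ n) (lam : Fin n → ℝ) (hlam : ∃ i, lam i ≤ 0)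
    (f : (Fin n → ℂ) → ℂ) (hf : Differentiable ℂ f)
    (hint : ∫⁻ w, ENNReal.ofReal (‖f w‖ ^ 2 * Real.exp (-(∑ j, lam j * ‖w j‖ ^ 2))) ∂volume
        < ⊤) :
    f = 0 := by
  obtain ⟨m, rfl⟩ : ∃ m, n = m + 1 := ⟨n - 1, (Nat.succ_pred_eq_of_pos hn).symm⟩
  obtain ⟨i, hi⟩ := hlam
  set e := MeasurableEquiv.piFinSuccAbove (fun _ : Fin (m + 1) => ℂ) i with he
  have hmp : MeasurePreserving e volume volume :=
    volume_preserving_piFinSuccAbove (fun _ : Fin (m + 1) => ℂ) i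
  have hmps : MeasurePreserving e.symm volume volume := hmp.symm e
  have hesymm : ∀ (ζ : ℂ) (y : Fin m → ℂ), e.symm (ζ, y) = i.insertNth ζ y :=
    fun ζ y => rfl
  have hφc : Continuous (fun w : Fin (m + 1) → ℂ => ∑ j, lam j * ‖w j‖ ^ 2) := by
    apply continuous_finset_sum
    intro j _
    exact continuous_const.mul ((continuous_apply j).norm.pow 2)
  set F : (Fin (m + 1) → ℂ) → ENNReal :=
    fun w => ENNReal.ofReal (‖f w‖ ^ 2 * Real.exp (-(∑ j, lam j * ‖w j‖ ^ 2))) with hFdef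
  have hFm : Measurable F :=
    ((hf.continuous.norm.pow 2).mul (hφc.neg.rexp)).measurable.ennreal_ofReal
  have hint2 : ∫⁻ z, F (e.symm z) ∂volume < ⊤ := by
    rw [hmps.lintegral_comp hFm]
    exact hint
  have hGm : Measurable fun z : ℂ × (Fin m → ℂ) => F (e.symm z) :=
    hFm.comp e.symm.measurable
  rw [Measure.volume_eq_prod] at hint2
  rw [lintegral_prod_symm _ hGm.aemeasurable] at hint2
  have hslice : ∀ᵐ y : Fin m → ℂ ∂volume,
      (∫⁻ ζ : ℂ, F (e.symm (ζ, y)) ∂volume) < ⊤ :=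
    ae_lt_top hGm.lintegral_prod_left' hint2.ne
  -- for each good slice, f vanishes on the whole fiber
  have hfiber : ∀ y : Fin m → ℂ, (∫⁻ ζ : ℂ, F (e.symm (ζ, y)) ∂volume) < ⊤ →
      ∀ ζ : ℂ, f (e.symm (ζ, y)) = 0 := by
    intro y hx
    set g : ℂ → ℂ := fun ζ => f (e.symm (ζ, y)) with hgdef
    set Sx : ℝ := ∑ j : Fin m, lam (i.succAbove j) * ‖y j‖ ^ 2 with hSx
    -- affine structure of the fiber map
    set v : Fin (m + 1) → ℂ := Pi.single i 1 with hv
    set b : Fin (m + 1) → ℂ := i.insertNth 0 y with hb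
    have haff : (fun ζ : ℂ => (e.symm (ζ, y) : Fin (m + 1) → ℂ)) = fun ζ => b + ζ • v := by
      funext ζ
      rw [hesymm]
      refine funext (Fin.succAboveCases i ?_ ?_)
      · simp [hb, hv, Fin.insertNth_apply_same, Pi.single_eq_same]
      · intro j
        simp [hb, hv, Fin.insertNth_apply_succAbove,
          Pi.single_eq_of_ne (Fin.succAbove_ne i j)]
    have hgdiff : Differentiable ℂ g := by
      apply hf.comp
      rw [haff]
      exact (differentiable_const b).add (differentiable_id.smul_const v)
    -- weight on the fiber
    have hweight : ∀ ζ : ℂ,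
        (∑ j, lam j * ‖(e.symm (ζ, y) : Fin (m + 1) → ℂ) j‖ ^ 2)
          = lam i * ‖ζ‖ ^ 2 + Sx := by
      intro ζ
      rw [hesymm]
      rw [Fin.sum_univ_succAbove (fun j => lam j * ‖(i.insertNth ζ y : Fin (m + 1) → ℂ) j‖ ^ 2) i]
      congr 1
      · rw [Fin.insertNth_apply_same]
      · apply Finset.sum_congr rfl
        intro j _
        rw [Fin.insertNth_apply_succAbove]
    have hE : (0:ℝ) < Real.exp (-Sx) := Real.exp_pos _
    -- L² bound on the slice
    have hcomp : ∀ ζ : ℂ, ENNReal.ofReal (Real.exp (-Sx)) * ENNReal.ofReal (‖g ζ‖ ^ 2)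
        ≤ F (e.symm (ζ, y)) := by
      intro ζ
      rw [← ENNReal.ofReal_mul hE.le]
      apply ENNReal.ofReal_le_ofReal
      rw [hweight ζ, neg_add, Real.exp_add]
      have h1le : (1:ℝ) ≤ Real.exp (-(lam i * ‖ζ‖ ^ 2)) := by
        apply Real.one_le_exp
        have : lam i * ‖ζ‖ ^ 2 ≤ 0 := mul_nonpos_of_nonpos_of_nonneg hi (by positivity)
        linarith
      have hgf : ‖g ζ‖ ^ 2 = ‖f (e.symm (ζ, y))‖ ^ 2 := rfl
      rw [hgf]
      have hmul := mul_le_mul_of_nonneg_right h1le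
        (mul_nonneg (sq_nonneg ‖f (e.symm (ζ, y))‖) hE.le)
      rw [one_mul] at hmul
      nlinarith [hmul]
    have hL2 : ∫⁻ ζ : ℂ, ENNReal.ofReal (‖g ζ‖ ^ 2) ∂volume < ⊤ := by
      have hconst : (∫⁻ ζ : ℂ, ENNReal.ofReal (Real.exp (-Sx)) * ENNReal.ofReal (‖g ζ‖ ^ 2) ∂volume)
          ≤ ∫⁻ ζ : ℂ, F (e.symm (ζ, y)) ∂volume :=
        lintegral_mono hcomp
      rw [lintegral_const_mul' _ _ ENNReal.ofReal_ne_top] at hconst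
      have hne : ENNReal.ofReal (Real.exp (-Sx)) ≠ 0 := by
        simp [ENNReal.ofReal_eq_zero, not_le, hE]
      have hlt := lt_of_le_of_lt hconst hx
      rw [ENNReal.mul_lt_top_iff] at hlt
      rcases hlt with ⟨_, h⟩ | h | h
      · exact h
      · exact absurd h hne
      · rw [h]; exact ENNReal.zero_lt_top
    have hg0 : g = 0 := entire_L2_zero g hgdiff hL2
    intro ζ
    exact congrFun hg0 ζ
  -- conclude f = 0 a.e. then everywhere
  have hae : ∀ᵐ z : ℂ × (Fin m → ℂ) ∂(volume.prod volume), f (e.symm z) = 0 := by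
    have hbad : ∀ᵐ y : Fin m → ℂ ∂volume, ∀ ζ : ℂ, f (e.symm (ζ, y)) = 0 := by
      filter_upwards [hslice] with y hy
      exact hfiber y hy
    rw [ae_iff] at hbad
    obtain ⟨t, hsub, htm, ht0⟩ := exists_measurable_superset_of_null hbad
    rw [ae_iff]
    have hsup : {z : ℂ × (Fin m → ℂ) | ¬ f (e.symm z) = 0} ⊆ (Set.univ : Set ℂ) ×ˢ t := by
      intro z hz
      refine ⟨Set.mem_univ _, hsub ?_⟩
      intro hq
      exact hz (by simpa using hq z.1)
    exact measure_mono_null hsup (by rw [Measure.prod_prod, ht0, mul_zero])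
  have haev : ∀ᵐ w : Fin (m + 1) → ℂ ∂volume, f w = 0 := by
    rw [← hmps.map_eq]
    rw [MeasureTheory.ae_map_iff e.symm.measurable.aemeasurable
      (measurableSet_eq_fun hf.continuous.measurable measurable_const)]
    rw [Measure.volume_eq_prod]
    exact hae
  exact (Continuous.ae_eq_iff_eq volume hf.continuous continuous_const).1 haev
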